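/- Example 4.7, second part: Let 0 < c < 1/2 and p > 1/(1 − 2c), and let Φ(0) = 0, Φ(t) = t^p · (1 + c·sin(p·ln t)) for t > 0. Then the indices of the Orlicz function Φ satisfy p_Φ = q_Φ = p; that is, log M(t,Φ)/log t converges to p both as t → 0⁺ and as t → ∞. -/

import Mathlib

open MeasureTheory Filter Set
open scoped ENNReal Topology

/-- An Orlicz function: continuous, nondecreasing and convex on `[0,∞)`,
vanishing at `0` and tending to `∞` at `∞`. -/
structure IsOrliczFunction (Φ : ℝ → ℝ) : Prop where
  continuousOn : ContinuousOn Φ (Set.Ici 0)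
  monotoneOn : MonotoneOn Φ (Set.Ici 0)
  convexOn : ConvexOn ℝ (Set.Ici 0) Φ
  map_zero : Φ 0 = 0
  tendsto_atTop : Tendsto Φ atTop atTop

/-- `M(t, Φ) = sup {Φ(ts)/Φ(s) : s > 0, Φ(s) > 0}`, as a value in `(0, ∞]`. -/
noncomputable def orliczM (Φ : ℝ → ℝ) (t : ℝ) : ℝ≥0∞ :=
  ⨆ s ∈ {s : ℝ | 0 < s ∧ 0 < Φ s}, ENNReal.ofReal (Φ (t * s) / Φ s)

/-- The quantity `log M(t, Φ) / log t`, as an extended real number.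
The index `p_Φ` is its limit as `t → 0⁺`, and `q_Φ` is its limit as `t → ∞`. -/
noncomputable def orliczLogRatio (Φ : ℝ → ℝ) (t : ℝ) : EReal :=
  ENNReal.log (orliczM Φ t) * ((Real.log t)⁻¹ : ℝ)

-- bounds on Φ
lemma phi_bounds (c p : ℝ) (hc0 : 0 < c) (hc : c < 1 / 2) (s : ℝ) (hs : 0 < s) :
    s ^ p * (1 - c) ≤ s ^ p * (1 + c * Real.sin (p * Real.log s)) ∧
      s ^ p * (1 + c * Real.sin (p * Real.log s)) ≤ s ^ p * (1 + c) := by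
  have hsp : (0:ℝ) < s ^ p := Real.rpow_pos_of_pos hs p
  have h1 := Real.neg_one_le_sin (p * Real.log s)
  have h2 := Real.sin_le_one (p * Real.log s)
  exact ⟨mul_le_mul_of_nonneg_left (by nlinarith) hsp.le,
    mul_le_mul_of_nonneg_left (by nlinarith) hsp.le⟩

lemma phi_pos (c p : ℝ) (hc0 : 0 < c) (hc : c < 1 / 2) (s : ℝ) (hs : 0 < s) :
    0 < s ^ p * (1 + c * Real.sin (p * Real.log s)) := by
  have := (phi_bounds c p hc0 hc s hs).1
  have hsp : (0:ℝ) < s ^ p := Real.rpow_pos_of_pos hs p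
  nlinarith

lemma key_bounds (c p : ℝ) (hc0 : 0 < c) (hc : c < 1 / 2) (t : ℝ) (ht : 0 < t) :
    ENNReal.log (orliczM (fun t : ℝ =>
        if t = 0 then 0 else t ^ p * (1 + c * Real.sin (p * Real.log t))) t)
      = ((ENNReal.log (orliczM (fun t : ℝ =>
        if t = 0 then 0 else t ^ p * (1 + c * Real.sin (p * Real.log t))) t)).toReal : EReal) ∧
    p * Real.log t + Real.log (1 - c) ≤
      (ENNReal.log (orliczM (fun t : ℝ =>
        if t = 0 then 0 else t ^ p * (1 + c * Real.sin (p * Real.log t))) t)).toReal ∧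
    (ENNReal.log (orliczM (fun t : ℝ =>
        if t = 0 then 0 else t ^ p * (1 + c * Real.sin (p * Real.log t))) t)).toReal ≤
      p * Real.log t + Real.log ((1 + c) / (1 - c)) := by
  set Φ : ℝ → ℝ := fun t : ℝ =>
    if t = 0 then 0 else t ^ p * (1 + c * Real.sin (p * Real.log t)) with hΦ
  have h1c : (0:ℝ) < 1 - c := by linarith
  have hΦeq : ∀ s : ℝ, 0 < s → Φ s = s ^ p * (1 + c * Real.sin (p * Real.log s)) := by
    intro s hs; simp [hΦ, ne_of_gt hs]
  have hΦpos : ∀ s : ℝ, 0 < s → 0 < Φ s := by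
    intro s hs; rw [hΦeq s hs]; exact phi_pos c p hc0 hc s hs
  -- upper bound on M
  have hub : orliczM Φ t ≤ ENNReal.ofReal (t ^ p * ((1 + c) / (1 - c))) := by
    refine iSup₂_le fun s hs => ENNReal.ofReal_le_ofReal ?_
    obtain ⟨hs0, -⟩ := hs
    have hts : 0 < t * s := mul_pos ht hs0
    have hnum : Φ (t * s) ≤ (t * s) ^ p * (1 + c) := by
      rw [hΦeq _ hts]; exact (phi_bounds c p hc0 hc _ hts).2
    have hden : s ^ p * (1 - c) ≤ Φ s := by
      rw [hΦeq _ hs0]; exact (phi_bounds c p hc0 hc _ hs0).1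
    have hsp : (0:ℝ) < s ^ p := Real.rpow_pos_of_pos hs0 p
    have h1 : Φ (t * s) / Φ s ≤ ((t * s) ^ p * (1 + c)) / (s ^ p * (1 - c)) :=
      div_le_div₀ (by positivity) hnum (by positivity) hden
    refine h1.trans (le_of_eq ?_)
    rw [Real.mul_rpow ht.le hs0.le]
    field_simp
  -- lower bound on M
  have hlb : ENNReal.ofReal (t ^ p * (1 - c)) ≤ orliczM Φ t := by
    have hφ1 : Φ 1 = 1 := by
      rw [hΦeq 1 one_pos]; simp
    refine le_iSup₂_of_le 1 ⟨one_pos, by rw [hφ1]; norm_num⟩ (ENNReal.ofReal_le_ofReal ?_)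
    rw [mul_one, hφ1, div_one, hΦeq t ht]
    exact (phi_bounds c p hc0 hc t ht).1
  have hlbpos : (0:ℝ) < t ^ p * (1 - c) := by
    have := Real.rpow_pos_of_pos ht p; positivity
  have hubpos : (0:ℝ) < t ^ p * ((1 + c) / (1 - c)) := by
    have := Real.rpow_pos_of_pos ht p; positivity
  have hloglb : (Real.log (t ^ p * (1 - c)) : EReal) ≤ ENNReal.log (orliczM Φ t) := by
    rw [← ENNReal.log_ofReal_of_pos hlbpos]
    exact ENNReal.log_monotone hlb
  have hlogub : ENNReal.log (orliczM Φ t) ≤ (Real.log (t ^ p * ((1 + c) / (1 - c))) : EReal) := by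
    rw [← ENNReal.log_ofReal_of_pos hubpos]
    exact ENNReal.log_monotone hub
  have hne_top : ENNReal.log (orliczM Φ t) ≠ ⊤ :=
    ((hlogub.trans_lt (EReal.coe_lt_top _))).ne
  have hne_bot : ENNReal.log (orliczM Φ t) ≠ ⊥ :=
    (lt_of_lt_of_le (EReal.bot_lt_coe _) hloglb).ne'
  have hcoe : ((ENNReal.log (orliczM Φ t)).toReal : EReal) = ENNReal.log (orliczM Φ t) :=
    EReal.coe_toReal hne_top hne_bot
  refine ⟨hcoe.symm, ?_, ?_⟩
  · have := hloglb; rw [← hcoe] at this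
    have h2 := EReal.coe_le_coe_iff.mp this
    rwa [Real.log_mul (by positivity) (by positivity), Real.log_rpow ht] at h2
  · have := hlogub; rw [← hcoe] at this
    have h2 := EReal.coe_le_coe_iff.mp this
    rwa [Real.log_mul (by positivity) (by positivity), Real.log_rpow ht] at h2

/-- Example 4.7, second part: for `0 < c < 1/2` and `p > 1/(1 - 2c)`, the
Orlicz function `Φ(0) = 0`, `Φ(t) = t^p (1 + c sin(p ln t))` (`t > 0`) has indices
`p_Φ = q_Φ = p`. -/
theorem orlicz_indices_rpow_mul_one_add_sin (c p : ℝ) (hc0 : 0 < c) (hc : c < 1 / 2)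
    (hp : 1 / (1 - 2 * c) < p) :
    Tendsto (orliczLogRatio (fun t : ℝ =>
        if t = 0 then 0 else t ^ p * (1 + c * Real.sin (p * Real.log t))))
        (𝓝[>] (0 : ℝ)) (𝓝 ((p : EReal))) ∧
      Tendsto (orliczLogRatio (fun t : ℝ =>
        if t = 0 then 0 else t ^ p * (1 + c * Real.sin (p * Real.log t))))
        atTop (𝓝 ((p : EReal))) := by
  set Φ : ℝ → ℝ := fun t : ℝ =>
    if t = 0 then 0 else t ^ p * (1 + c * Real.sin (p * Real.log t)) with hΦ
  set g : ℝ → ℝ := fun t => (ENNReal.log (orliczM Φ t)).toReal * (Real.log t)⁻¹ with hg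
  set a : ℝ := Real.log (1 - c) with ha
  set b : ℝ := Real.log ((1 + c) / (1 - c)) with hb
  have hgeq : ∀ t : ℝ, 0 < t → orliczLogRatio Φ t = ((g t : ℝ) : EReal) := by
    intro t ht
    rw [orliczLogRatio, (key_bounds c p hc0 hc t ht).1, ← EReal.coe_mul]
  have hbd : ∀ t : ℝ, 0 < t →
      p * Real.log t + a ≤ (ENNReal.log (orliczM Φ t)).toReal ∧
        (ENNReal.log (orliczM Φ t)).toReal ≤ p * Real.log t + b := by
    intro t ht
    exact ⟨(key_bounds c p hc0 hc t ht).2.1, (key_bounds c p hc0 hc t ht).2.2⟩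
  constructor
  · -- t → 0⁺
    have hlim0 : Tendsto (fun t : ℝ => (Real.log t)⁻¹) (𝓝[>] (0:ℝ)) (𝓝 0) := by
      have h := ((tendsto_neg_atBot_atTop).comp
        Real.tendsto_log_nhdsGT_zero).inv_tendsto_atTop
      have h2 := h.neg
      simp only [Pi.inv_apply, Function.comp_def, inv_neg, neg_neg, neg_zero] at h2
      exact h2
    have hlo : Tendsto (fun t : ℝ => p + b * (Real.log t)⁻¹) (𝓝[>] (0:ℝ)) (𝓝 p) := by
      have := (tendsto_const_nhds.add (hlim0.const_mul b) :
        Tendsto (fun t : ℝ => p + b * (Real.log t)⁻¹) _ (𝓝 (p + b * 0)))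
      simpa using this
    have hhi : Tendsto (fun t : ℝ => p + a * (Real.log t)⁻¹) (𝓝[>] (0:ℝ)) (𝓝 p) := by
      have := (tendsto_const_nhds.add (hlim0.const_mul a) :
        Tendsto (fun t : ℝ => p + a * (Real.log t)⁻¹) _ (𝓝 (p + a * 0)))
      simpa using this
    have hev : ∀ᶠ t : ℝ in 𝓝[>] (0:ℝ), t ∈ Ioo (0:ℝ) 1 :=
      Ioo_mem_nhdsGT (by norm_num)
    have hgt : Tendsto g (𝓝[>] (0:ℝ)) (𝓝 p) := by
      refine tendsto_of_tendsto_of_tendsto_of_le_of_le' hlo hhi ?_ ?_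
      · filter_upwards [hev] with t ht
        obtain ⟨ht0, ht1⟩ := ht
        have hlt : Real.log t < 0 := Real.log_neg ht0 ht1
        have hinv : (Real.log t)⁻¹ < 0 := inv_lt_zero.2 hlt
        have hne : Real.log t ≠ 0 := hlt.ne
        have h1 := (hbd t ht0).2
        have h2 : (p * Real.log t + b) * (Real.log t)⁻¹ ≤ g t :=
          mul_le_mul_of_nonpos_right h1 hinv.le
        refine le_trans (le_of_eq ?_) h2
        rw [add_mul, mul_assoc, mul_inv_cancel₀ hne, mul_one]
      · filter_upwards [hev] with t ht
        obtain ⟨ht0, ht1⟩ := ht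
        have hlt : Real.log t < 0 := Real.log_neg ht0 ht1
        have hinv : (Real.log t)⁻¹ < 0 := inv_lt_zero.2 hlt
        have hne : Real.log t ≠ 0 := hlt.ne
        have h1 := (hbd t ht0).1
        have h2 : g t ≤ (p * Real.log t + a) * (Real.log t)⁻¹ :=
          mul_le_mul_of_nonpos_right h1 hinv.le
        refine h2.trans (le_of_eq ?_)
        rw [add_mul, mul_assoc, mul_inv_cancel₀ hne, mul_one]
    have : Tendsto (fun t : ℝ => ((g t : ℝ) : EReal)) (𝓝[>] (0:ℝ)) (𝓝 (p : EReal)) :=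
      EReal.tendsto_coe.mpr hgt
    refine this.congr' ?_
    filter_upwards [self_mem_nhdsWithin] with t ht
    exact (hgeq t ht).symm
  · -- t → ∞
    have hlim0 : Tendsto (fun t : ℝ => (Real.log t)⁻¹) atTop (𝓝 0) :=
      tendsto_inv_atTop_zero.comp Real.tendsto_log_atTop
    have hlo : Tendsto (fun t : ℝ => p + a * (Real.log t)⁻¹) atTop (𝓝 p) := by
      have := (tendsto_const_nhds.add (hlim0.const_mul a) :
        Tendsto (fun t : ℝ => p + a * (Real.log t)⁻¹) _ (𝓝 (p + a * 0)))
      simpa using this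
    have hhi : Tendsto (fun t : ℝ => p + b * (Real.log t)⁻¹) atTop (𝓝 p) := by
      have := (tendsto_const_nhds.add (hlim0.const_mul b) :
        Tendsto (fun t : ℝ => p + b * (Real.log t)⁻¹) _ (𝓝 (p + b * 0)))
      simpa using this
    have hgt : Tendsto g atTop (𝓝 p) := by
      refine tendsto_of_tendsto_of_tendsto_of_le_of_le' hlo hhi ?_ ?_
      · filter_upwards [eventually_gt_atTop (1:ℝ)] with t ht1
        have ht0 : (0:ℝ) < t := lt_trans one_pos ht1
        have hgt0 : 0 < Real.log t := Real.log_pos ht1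
        have hne : Real.log t ≠ 0 := hgt0.ne'
        have h1 := (hbd t ht0).1
        have h2 : (p * Real.log t + a) * (Real.log t)⁻¹ ≤ g t :=
          mul_le_mul_of_nonneg_right h1 (inv_pos.mpr hgt0).le
        refine le_trans (le_of_eq ?_) h2
        rw [add_mul, mul_assoc, mul_inv_cancel₀ hne, mul_one]
      · filter_upwards [eventually_gt_atTop (1:ℝ)] with t ht1
        have ht0 : (0:ℝ) < t := lt_trans one_pos ht1
        have hgt0 : 0 < Real.log t := Real.log_pos ht1
        have hne : Real.log t ≠ 0 := hgt0.ne'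
        have h1 := (hbd t ht0).2
        have h2 : g t ≤ (p * Real.log t + b) * (Real.log t)⁻¹ :=
          mul_le_mul_of_nonneg_right h1 (inv_pos.mpr hgt0).le
        refine h2.trans (le_of_eq ?_)
        rw [add_mul, mul_assoc, mul_inv_cancel₀ hne, mul_one]
    have : Tendsto (fun t : ℝ => ((g t : ℝ) : EReal)) atTop (𝓝 (p : EReal)) :=
      EReal.tendsto_coe.mpr hgt
    refine this.congr' ?_
    filter_upwards [eventually_gt_atTop (0:ℝ)] with t ht
    exact (hgeq t ht).symm
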